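/- In the polynomial ring R = K[t₁,t₂] over a field K, the elements a = t₁ and b = t₁t₂ are algebraically dependent over R with respect to the lexicographic monomial ordering with x₁ > x₂ (via the relation b − t₂a = 0), but algebraically independent over R with respect to the lexicographic ordering with x₂ > x₁; concretely, for all i,j ∈ ℕ, the element t₁^{i+j} t₂^j does not lie in the ideal of R generated by (t₁t₂)^{j+1} and t₁^{i+j+1} t₂^j. -/

import Mathlib

/-- A multivariate polynomial is *submonic with respect to the lexicographic
monomial ordering* (with `x 0 > x 1 > …`) if the least monomial of its support
(for the lexicographic order on exponents) has coefficient `1`. -/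
def MvPolynomial.SubmonicLex {n : ℕ} {R : Type*} [CommRing R]
    (f : MvPolynomial (Fin n) R) : Prop :=
  ∃ m ∈ f.support, MvPolynomial.coeff m f = 1 ∧
    ∀ m' ∈ f.support, toLex m ≤ toLex m'

open MvPolynomial in
/-- In `R = K[t₁,t₂]`, the elements `a = t₁`, `b = t₁t₂` are algebraically
dependent over `R` w.r.t. the lexicographic ordering with `x₁ > x₂`, but for the
lexicographic ordering with `x₂ > x₁` they are independent: concretely,
`t₁^(i+j) t₂^j ∉ ((t₁t₂)^(j+1), t₁^(i+j+1) t₂^j)` for all `i, j`. -/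
theorem lex_dependence_depends_on_ordering {K : Type*} [Field K] :
    (∃ f : MvPolynomial (Fin 2) (MvPolynomial (Fin 2) K), f.SubmonicLex ∧
      MvPolynomial.eval ![(X 0 : MvPolynomial (Fin 2) K), X 0 * X 1] f = 0) ∧
    ∀ i j : ℕ, (X 0 : MvPolynomial (Fin 2) K) ^ (i + j) * X 1 ^ j ∉
      Ideal.span {((X 0 : MvPolynomial (Fin 2) K) * X 1) ^ (j + 1),
        X 0 ^ (i + j + 1) * X 1 ^ j} := by
  constructor
  · refine ⟨X 1 - C (X 1) * X 0, ⟨Finsupp.single 1 1, ?_, ?_, ?_⟩, ?_⟩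
    · rw [mem_support_iff]
      simp [coeff_sub, coeff_X', coeff_C_mul, Finsupp.single_eq_single_iff]
    · simp [coeff_sub, coeff_X', coeff_C_mul, Finsupp.single_eq_single_iff]
    · intro m' hm'
      have h := MvPolynomial.support_sub (Fin 2) (X 1)
        (C (X 1 : MvPolynomial (Fin 2) K) * X 0) hm'
      have hX1 : (X 1 : MvPolynomial (Fin 2) (MvPolynomial (Fin 2) K)).support
          = {Finsupp.single 1 1} := support_X
      have hCX : (C (X 1 : MvPolynomial (Fin 2) K) * X 0 :
          MvPolynomial (Fin 2) (MvPolynomial (Fin 2) K)).support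
          ⊆ {Finsupp.single 0 1} := by
        rw [show (C (X 1 : MvPolynomial (Fin 2) K) * X 0 :
            MvPolynomial (Fin 2) (MvPolynomial (Fin 2) K))
            = monomial (Finsupp.single 0 1) (X 1) by
          rw [show (X 0 : MvPolynomial (Fin 2) (MvPolynomial (Fin 2) K))
              = monomial (Finsupp.single 0 1) 1 from rfl, C_mul_monomial, mul_one]]
        exact support_monomial_subset
      rcases Finset.mem_union.1 h with h1 | h2
      · rw [hX1, Finset.mem_singleton] at h1; rw [h1]
      · have := hCX h2
        rw [Finset.mem_singleton] at this
        rw [this]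
        apply le_of_lt
        rw [Finsupp.Lex.lt_iff]
        refine ⟨0, fun j hj => absurd hj ?_, by simp⟩
        simp [Fin.not_lt]
    · simp only [map_sub, eval_mul, eval_C, eval_X, Matrix.cons_val_one, Matrix.head_cons,
        Matrix.cons_val_zero]
      ring
  · intro i j hmem
    rw [Ideal.mem_span_pair] at hmem
    obtain ⟨u, v, huv⟩ := hmem
    have := congrArg (coeff (Finsupp.single 0 (i + j) + Finsupp.single 1 j)) huv
    rw [coeff_add] at this
    have e1 : ((X 0 : MvPolynomial (Fin 2) K) * X 1) ^ (j + 1)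
        = monomial (Finsupp.single 0 (j + 1) + Finsupp.single 1 (j + 1)) 1 := by
      rw [mul_pow, X_pow_eq_monomial, X_pow_eq_monomial, monomial_mul, one_mul]
    have e2 : (X 0 : MvPolynomial (Fin 2) K) ^ (i + j + 1) * X 1 ^ j
        = monomial (Finsupp.single 0 (i + j + 1) + Finsupp.single 1 j) 1 := by
      rw [X_pow_eq_monomial, X_pow_eq_monomial, monomial_mul, one_mul]
    have e3 : (X 0 : MvPolynomial (Fin 2) K) ^ (i + j) * X 1 ^ j
        = monomial (Finsupp.single 0 (i + j) + Finsupp.single 1 j) 1 := by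
      rw [X_pow_eq_monomial, X_pow_eq_monomial, monomial_mul, one_mul]
    rw [e1, e2, e3, coeff_mul_monomial', coeff_mul_monomial', coeff_monomial,
      if_pos rfl] at this
    rw [if_neg, if_neg, add_zero] at this
    · exact one_ne_zero this.symm
    · intro hle
      have h0 := hle 0
      simp [Finsupp.single_apply] at h0
    · intro hle
      have h1 := hle 1
      simp [Finsupp.single_apply] at h1
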